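/- Assume W satisfies hypotheses (H), and let μ > 0 be such that W(u) ≤ (μ/2)|u − a⁻|² for all u with |u − a⁻| ≤ r and W(u) ≤ (μ/2)|u − a⁺|² for all u with |u − a⁺| ≤ r. Then for every ε ∈ (0,r) and every α < β, every v ∈ H¹([α,β];ℝ^m) with |v(α) − a⁻| = ε and |v(β) − a⁺| = ε satisfies J_{[α,β]}(v) ≥ J_min − (μ+1)ε². -/

import Mathlib

open MeasureTheory Filter
open scoped ENNReal RealInnerProductSpace

noncomputable section

/-- Hypotheses (H) on the potential `W : ℝ^m → ℝ`: regularity `C^{2,α}`, nonnegativity,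
exactly two zeros `a⁻, a⁺`, nondegeneracy (`D²W ≥ c` near the zeros), and coercivity
(`liminf_{|u|→∞} W(u) > 0`). -/
structure HypH (m : ℕ) (W : EuclideanSpace ℝ (Fin m) → ℝ)
    (am ap : EuclideanSpace ℝ (Fin m)) (r c : ℝ) : Prop where
  dim : 2 ≤ m
  smooth : ContDiff ℝ 2 W
  holder : ∃ α ∈ Set.Ioo (0 : ℝ) 1, ∀ K : Set (EuclideanSpace ℝ (Fin m)), IsCompact K →
    ∃ C : ℝ, ∀ u ∈ K, ∀ v ∈ K,
      ‖iteratedFDeriv ℝ 2 W u - iteratedFDeriv ℝ 2 W v‖ ≤ C * ‖u - v‖ ^ α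
  nonneg : ∀ u, 0 ≤ W u
  zero_am : W am = 0
  zero_ap : W ap = 0
  am_ne_ap : am ≠ ap
  zeros : ∀ u, W u = 0 → u = am ∨ u = ap
  r_pos : 0 < r
  c_pos : 0 < c
  convex : ∀ u ν : EuclideanSpace ℝ (Fin m), (‖u - am‖ ≤ r ∨ ‖u - ap‖ ≤ r) → ‖ν‖ = 1 →
    c ≤ iteratedFDeriv ℝ 2 W u ![ν, ν]
  coercive : ∃ ε > (0 : ℝ), ∃ R : ℝ, ∀ u, R ≤ ‖u‖ → ε ≤ W u

variable {m : ℕ}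

/-- `v ∈ W^{1,2}_loc(ℝ;ℝ^m)` (absolutely continuous representative) with weak
derivative `v'`. -/
def IsW12loc (v v' : ℝ → EuclideanSpace ℝ (Fin m)) : Prop :=
  (∀ a b : ℝ, v b - v a = ∫ x in a..b, v' x) ∧
    LocallyIntegrable (fun x => ‖v' x‖ ^ 2) volume

/-- `v` has a distributional derivative `v'` belonging to `L²(ℝ;ℝ^m)`. -/
def HasL2Deriv (v v' : ℝ → EuclideanSpace ℝ (Fin m)) : Prop :=
  (∀ a b : ℝ, v b - v a = ∫ x in a..b, v' x) ∧ MemLp v' 2 volume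

/-- The action `J_ℝ(v) = ∫_ℝ [½|v'|² + W(v)]`. -/
def actJ (W : EuclideanSpace ℝ (Fin m) → ℝ)
    (v v' : ℝ → EuclideanSpace ℝ (Fin m)) : ℝ≥0∞ :=
  ∫⁻ x, ENNReal.ofReal (‖v' x‖ ^ 2 / 2 + W (v x))

/-- The action `J_I(v)` over a set `I ⊂ ℝ`. -/
def actJI (W : EuclideanSpace ℝ (Fin m) → ℝ)
    (v v' : ℝ → EuclideanSpace ℝ (Fin m)) (I : Set ℝ) : ℝ≥0∞ :=
  ∫⁻ x in I, ENNReal.ofReal (‖v' x‖ ^ 2 / 2 + W (v x))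

/-- Membership in the class `A`: connecting `a⁻` (at `−∞`) to `a⁺` (at `+∞`). -/
def memA (am ap : EuclideanSpace ℝ (Fin m)) (v : ℝ → EuclideanSpace ℝ (Fin m)) : Prop :=
  Tendsto v atBot (nhds am) ∧ Tendsto v atTop (nhds ap)

/-- `v` (with derivative `v'`) is a minimal heteroclinic, `Jmin` being the minimal action. -/
def IsMinHet (W : EuclideanSpace ℝ (Fin m) → ℝ) (am ap : EuclideanSpace ℝ (Fin m))
    (Jmin : ℝ) (v v' : ℝ → EuclideanSpace ℝ (Fin m)) : Prop :=
  IsW12loc v v' ∧ memA am ap v ∧ actJ W v v' = ENNReal.ofReal Jmin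

/-- `Jmin` is the (attained) minimum of the action `J_ℝ` over the class `A`. -/
def IsMinAction (W : EuclideanSpace ℝ (Fin m) → ℝ) (am ap : EuclideanSpace ℝ (Fin m))
    (Jmin : ℝ) : Prop :=
  0 ≤ Jmin ∧ (∃ v v', IsMinHet W am ap Jmin v v') ∧
    ∀ v v', IsW12loc v v' → memA am ap v → ENNReal.ofReal Jmin ≤ actJ W v v'

/-- The set `F` of minimal heteroclinics. -/
def hetF (W : EuclideanSpace ℝ (Fin m) → ℝ) (am ap : EuclideanSpace ℝ (Fin m))
    (Jmin : ℝ) : Set (ℝ → EuclideanSpace ℝ (Fin m)) :=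
  {v | ∃ v', IsMinHet W am ap Jmin v v'}

/-- The reference map `𝔢₀`. -/
def ee₀ (am ap : EuclideanSpace ℝ (Fin m)) (x : ℝ) : EuclideanSpace ℝ (Fin m) :=
  if x ≤ -1 then am else if x ≤ 1 then am + ((x + 1) / 2) • (ap - am) else ap

/-- The derivative of the reference map `𝔢₀`. -/
def ee₀' (am ap : EuclideanSpace ℝ (Fin m)) (x : ℝ) : EuclideanSpace ℝ (Fin m) :=
  if -1 < x ∧ x < 1 then ((2 : ℝ)⁻¹) • (ap - am) else 0

-- The effective potential `𝒲(u) = J_ℝ(u) − J_min` when `u` has an `L²` distributional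
-- derivative, `+∞` otherwise.
open Classical in
def effW (W : EuclideanSpace ℝ (Fin m) → ℝ) (Jmin : ℝ)
    (u : ℝ → EuclideanSpace ℝ (Fin m)) : ℝ≥0∞ :=
  if h : ∃ u', HasL2Deriv u u' then actJ W u h.choose - ENNReal.ofReal Jmin else ⊤

/-- The `L²` distance from `u` to a set `S` of maps: `d_ℋ(u,S)`. -/
def distH (u : ℝ → EuclideanSpace ℝ (Fin m))
    (S : Set (ℝ → EuclideanSpace ℝ (Fin m))) : ℝ≥0∞ :=
  ⨅ e ∈ S, eLpNorm (fun x => u x - e x) 2 volume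

/-- The `H¹` norm (as an extended real) of a pair `(f, f')`. -/
def eH1 (f f' : ℝ → EuclideanSpace ℝ (Fin m)) : ℝ≥0∞ :=
  (eLpNorm f 2 volume ^ 2 + eLpNorm f' 2 volume ^ 2) ^ (1 / 2 : ℝ)

/-- The `H¹` distance from `(u, u')` to the set `F` of minimal heteroclinics:
`d_ℋ̃(u,F)`. -/
def distH1F (W : EuclideanSpace ℝ (Fin m) → ℝ) (am ap : EuclideanSpace ℝ (Fin m))
    (Jmin : ℝ) (u u' : ℝ → EuclideanSpace ℝ (Fin m)) : ℝ≥0∞ :=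
  ⨅ (e : ℝ → EuclideanSpace ℝ (Fin m)) (e' : ℝ → EuclideanSpace ℝ (Fin m))
    (_ : IsMinHet W am ap Jmin e e'),
    eH1 (fun x => u x - e x) (fun x => u' x - e' x)

/-- glued path -/
def gl (am ap p q : EuclideanSpace ℝ (Fin m)) (s t : ℝ)
    (mid : ℝ → EuclideanSpace ℝ (Fin m)) (x : ℝ) : EuclideanSpace ℝ (Fin m) :=
  if x < s then (if x ≤ s - 1 then am else am + (x - (s-1)) • (p - am))
  else if x ≤ t then mid x
  else if x ≤ t + 1 then q + (x - t) • (ap - q) else ap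

def gl' (am ap p q : EuclideanSpace ℝ (Fin m)) (s t : ℝ)
    (mid' : ℝ → EuclideanSpace ℝ (Fin m)) (x : ℝ) : EuclideanSpace ℝ (Fin m) :=
  if x ≤ s - 1 then 0 else if x ≤ s then p - am
  else if x ≤ t then mid' x
  else if x ≤ t + 1 then ap - q else 0

lemma glue_bound (W : EuclideanSpace ℝ (Fin m) → ℝ)
    (am ap : EuclideanSpace ℝ (Fin m)) (r : ℝ)
    (hWam : W am = 0) (hWap : W ap = 0)
    (μ : ℝ) (hμ : 0 ≤ μ)
    (hquad : ∀ u : EuclideanSpace ℝ (Fin m),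
      (‖u - am‖ ≤ r → W u ≤ μ / 2 * ‖u - am‖ ^ 2) ∧
      (‖u - ap‖ ≤ r → W u ≤ μ / 2 * ‖u - ap‖ ^ 2))
    (Jmin : ℝ)
    (hJ : ∀ v v', IsW12loc v v' → memA am ap v → ENNReal.ofReal Jmin ≤ actJ W v v')
    (s t : ℝ) (hst : s < t) (mid mid' : ℝ → EuclideanSpace ℝ (Fin m))
    (hmid : ∀ a ∈ Set.Icc s t, ∀ b ∈ Set.Icc s t, mid b - mid a = ∫ x in a..b, mid' x)
    (hii : IntervalIntegrable mid' volume s t)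
    (hsq : IntegrableOn (fun x => ‖mid' x‖ ^ 2) (Set.Icc s t) volume)
    (hδ1 : ‖mid s - am‖ ≤ r) (hδ2 : ‖mid t - ap‖ ≤ r) :
    ENNReal.ofReal Jmin ≤
      (∫⁻ x in Set.Ioc s t, ENNReal.ofReal (‖mid' x‖ ^ 2 / 2 + W (mid x)))
        + ENNReal.ofReal ((1 + μ) / 2 * (‖mid s - am‖ ^ 2 + ‖mid t - ap‖ ^ 2)) := by
  set p := mid s with hp
  set q := mid t with hq
  set u := gl am ap p q s t mid with hudef
  set u' := gl' am ap p q s t mid' with hu'def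
  clear_value p q u u'
  have hs1 : s - 1 < s := by linarith
  have hst1 : t < t + 1 := by linarith
  -- u' as a sum of indicators
  have hu'eq : u' = fun x => (Set.Ioc (s-1) s).indicator (fun _ => p - am) x
      + (Set.Ioc s t).indicator mid' x
      + (Set.Ioc t (t+1)).indicator (fun _ => ap - q) x := by
    funext x
    by_cases h1 : x ≤ s - 1
    · have n1 : x ∉ Set.Ioc (s-1) s := by intro h; have := h.1; linarith
      have n2 : x ∉ Set.Ioc s t := by intro h; have := h.1; linarith
      have n3 : x ∉ Set.Ioc t (t+1) := by intro h; have := h.1; linarith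
      simp [hu'def, gl', h1, Set.indicator_of_notMem, n1, n2, n3]
    · by_cases h2 : x ≤ s
      · have m1 : x ∈ Set.Ioc (s-1) s := ⟨not_le.1 h1, h2⟩
        have n2 : x ∉ Set.Ioc s t := by intro h; have := h.1; linarith
        have n3 : x ∉ Set.Ioc t (t+1) := by intro h; have := h.1; linarith
        simp [hu'def, gl', h1, h2, Set.indicator_of_mem m1, Set.indicator_of_notMem, n2, n3]
      · by_cases h3 : x ≤ t
        · have n1 : x ∉ Set.Ioc (s-1) s := by intro h; have := h.2; linarith
          have m2 : x ∈ Set.Ioc s t := ⟨not_le.1 h2, h3⟩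
          have n3 : x ∉ Set.Ioc t (t+1) := by intro h; have := h.1; linarith
          simp [hu'def, gl', h1, h2, h3, Set.indicator_of_mem m2, Set.indicator_of_notMem, n1, n3]
        · by_cases h4 : x ≤ t + 1
          · have n1 : x ∉ Set.Ioc (s-1) s := by intro h; have := h.2; linarith
            have n2 : x ∉ Set.Ioc s t := by intro h; have := h.2; linarith
            have m3 : x ∈ Set.Ioc t (t+1) := ⟨not_le.1 h3, h4⟩
            simp [hu'def, gl', h1, h2, h3, h4, Set.indicator_of_mem m3,
              Set.indicator_of_notMem, n1, n2]
          · have n1 : x ∉ Set.Ioc (s-1) s := by intro h; have := h.2; linarith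
            have n2 : x ∉ Set.Ioc s t := by intro h; have := h.2; linarith
            have n3 : x ∉ Set.Ioc t (t+1) := by intro h; have := h.2; linarith
            simp [hu'def, gl', h1, h2, h3, h4, Set.indicator_of_notMem, n1, n2, n3]
  -- integrability of u'
  have hIonIoc : IntegrableOn mid' (Set.Ioc s t) volume :=
    (intervalIntegrable_iff_integrableOn_Ioc_of_le hst.le).1 hii
  have hint_u' : Integrable u' volume := by
    rw [hu'eq]
    refine Integrable.add (Integrable.add ?_ ?_) ?_
    · exact (integrable_indicator_iff measurableSet_Ioc).2
        (integrableOn_const measure_Ioc_lt_top.ne)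
    · exact (integrable_indicator_iff measurableSet_Ioc).2 hIonIoc
    · exact (integrable_indicator_iff measurableSet_Ioc).2
        (integrableOn_const measure_Ioc_lt_top.ne)
  have hII : ∀ a b : ℝ, IntervalIntegrable u' volume a b :=
    fun a b => hint_u'.intervalIntegrable
  -- FTC pieces
  have e1 : ∀ w, s - 1 < w → w ≤ s →
      (∫ x in (s-1)..w, u' x) = (w - (s-1)) • (p - am) := by
    intro w h0 h1
    rw [intervalIntegral.integral_congr_ae (g := fun _ => p - am) ?_,
      intervalIntegral.integral_const]
    filter_upwards with x hx
    rw [Set.mem_uIoc] at hx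
    rcases hx with ⟨ha, hb⟩ | ⟨ha, hb⟩
    · simp [hu'def, gl', not_le.2 ha, hb.trans h1]
    · exfalso; linarith
  have e1s : (∫ x in (s-1)..s, u' x) = p - am := by
    rw [e1 s hs1 le_rfl]; simp
  have e2 : ∀ w, s ≤ w → w ≤ t → (∫ x in (s-1)..w, u' x) = mid w - am := by
    intro w h0 h1
    rw [← intervalIntegral.integral_add_adjacent_intervals (hII (s-1) s) (hII s w), e1s]
    have : (∫ x in s..w, u' x) = ∫ x in s..w, mid' x := by
      apply intervalIntegral.integral_congr_ae
      filter_upwards with x hx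
      rw [Set.mem_uIoc] at hx
      rcases hx with ⟨ha, hb⟩ | ⟨ha, hb⟩
      · have hx1 : ¬ x ≤ s - 1 := by push_neg; linarith
        have hx2 : ¬ x ≤ s := by push_neg; linarith
        simp [hu'def, gl', hx1, hx2, hb.trans h1]
      · exfalso; linarith
    rw [this, ← hmid s ⟨le_rfl, hst.le⟩ w ⟨h0, h1⟩, ← hp]
    abel
  have e2t : (∫ x in (s-1)..t, u' x) = q - am := by rw [hq]; exact e2 t hst.le le_rfl
  have e3 : ∀ w, t ≤ w → w ≤ t + 1 →
      (∫ x in (s-1)..w, u' x) = q + (w - t) • (ap - q) - am := by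
    intro w h0 h1
    rw [← intervalIntegral.integral_add_adjacent_intervals (hII (s-1) t) (hII t w), e2t]
    have : (∫ x in t..w, u' x) = ∫ x in t..w, (ap - q) := by
      apply intervalIntegral.integral_congr_ae
      filter_upwards with x hx
      rw [Set.mem_uIoc] at hx
      rcases hx with ⟨ha, hb⟩ | ⟨ha, hb⟩
      · have hx1 : ¬ x ≤ s - 1 := by push_neg; linarith
        have hx2 : ¬ x ≤ s := by push_neg; linarith
        have hx3 : ¬ x ≤ t := by push_neg; linarith
        simp [hu'def, gl', hx1, hx2, hx3, hb.trans h1]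
      · exfalso; linarith
    rw [this, intervalIntegral.integral_const]
    abel
  have e3t : (∫ x in (s-1)..(t+1), u' x) = ap - am := by
    rw [e3 (t+1) (by linarith) le_rfl]
    simp
  have e4 : ∀ w, t + 1 ≤ w → (∫ x in (s-1)..w, u' x) = ap - am := by
    intro w h0
    rw [← intervalIntegral.integral_add_adjacent_intervals (hII (s-1) (t+1)) (hII (t+1) w), e3t]
    have : (∫ x in (t+1)..w, u' x) = ∫ x in (t+1)..w, (0 : EuclideanSpace ℝ (Fin m)) := by
      apply intervalIntegral.integral_congr_ae
      filter_upwards with x hx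
      rw [Set.mem_uIoc] at hx
      rcases hx with ⟨ha, hb⟩ | ⟨ha, hb⟩
      · have hx1 : ¬ x ≤ s - 1 := by push_neg; linarith
        have hx2 : ¬ x ≤ s := by push_neg; linarith
        have hx3 : ¬ x ≤ t := by push_neg; linarith
        have hx4 : ¬ x ≤ t + 1 := by push_neg; linarith
        simp [hu'def, gl', hx1, hx2, hx3, hx4]
      · exfalso; linarith
    rw [this]
    simp
  -- anchored FTC
  have hA : ∀ w, (∫ x in (s-1)..w, u' x) = u w - am := by
    intro w
    rcases le_or_gt w (s-1) with h0 | h0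
    · have : (∫ x in (s-1)..w, u' x) = ∫ x in (s-1)..w, (0 : EuclideanSpace ℝ (Fin m)) := by
        apply intervalIntegral.integral_congr_ae
        filter_upwards with x hx
        rw [Set.mem_uIoc] at hx
        rcases hx with ⟨ha, hb⟩ | ⟨ha, hb⟩
        · exfalso; linarith
        · simp [hu'def, gl', hb]
      rw [this]
      have hw : u w = am := by
        simp [hudef, gl, h0, lt_of_le_of_lt h0 hs1]
      rw [hw]; simp
    · rcases le_or_gt w s with h1 | h1
      · rw [e1 w h0 h1]
        rcases lt_or_eq_of_le h1 with h1' | h1'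
        · have hw : u w = am + (w - (s-1)) • (p - am) := by
            simp [hudef, gl, h1', not_le.2 h0]
          rw [hw]; abel
        · subst h1'
          have hw : u w = p := by simp [hudef, gl, hp, hst.le]
          rw [hw]; simp
      · rcases le_or_gt w t with h2 | h2
        · rw [e2 w h1.le h2]
          have hw : u w = mid w := by simp [hudef, gl, not_lt.2 h1.le, h2]
          rw [hw]
        · rcases le_or_gt w (t+1) with h3 | h3
          · rw [e3 w h2.le h3]
            have hw : u w = q + (w - t) • (ap - q) := by
              have : ¬ w < s := by push_neg; linarith
              simp [hudef, gl, this, not_le.2 h2, h3]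
            rw [hw]
          · rw [e4 w h3.le]
            have hw : u w = ap := by
              have hns : ¬ w < s := by push_neg; linarith
              have hnt : ¬ w ≤ t := by push_neg; linarith
              have hnt1 : ¬ w ≤ t + 1 := by push_neg; linarith
              simp [hudef, gl, hns, hnt, hnt1]
            rw [hw]
  have hFTC : ∀ a b : ℝ, u b - u a = ∫ x in a..b, u' x := by
    intro a b
    have h := intervalIntegral.integral_interval_sub_left (hII (s-1) b) (hII (s-1) a)
    rw [hA, hA] at h
    rw [← h]; abel
  -- local integrability of ‖u'‖²
  have hnormsq : (fun x => ‖u' x‖ ^ 2) = fun x =>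
      (Set.Ioc (s-1) s).indicator (fun _ => ‖p - am‖ ^ 2) x
      + (Set.Ioc s t).indicator (fun y => ‖mid' y‖ ^ 2) x
      + (Set.Ioc t (t+1)).indicator (fun _ => ‖ap - q‖ ^ 2) x := by
    have h := hu'eq
    funext x
    have hx := congrFun h x
    by_cases h1 : x ∈ Set.Ioc (s-1) s
    · have n2 : x ∉ Set.Ioc s t := by intro hh; have := hh.1; have := h1.2; linarith
      have n3 : x ∉ Set.Ioc t (t+1) := by intro hh; have := hh.1; have := h1.2; linarith
      rw [hx]
      simp [Set.indicator_of_mem h1, Set.indicator_of_notMem, n2, n3]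
    · by_cases h2 : x ∈ Set.Ioc s t
      · have n3 : x ∉ Set.Ioc t (t+1) := by intro hh; have := hh.1; have := h2.2; linarith
        rw [hx]
        simp [Set.indicator_of_mem h2, Set.indicator_of_notMem, h1, n3]
      · by_cases h3 : x ∈ Set.Ioc t (t+1)
        · rw [hx]
          simp [Set.indicator_of_mem h3, Set.indicator_of_notMem, h1, h2]
        · rw [hx]
          simp [Set.indicator_of_notMem, h1, h2, h3]
  have hloc : LocallyIntegrable (fun x => ‖u' x‖ ^ 2) volume := by
    rw [hnormsq]
    refine Integrable.locallyIntegrable (Integrable.add (Integrable.add ?_ ?_) ?_)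
    · exact (integrable_indicator_iff measurableSet_Ioc).2
        (integrableOn_const measure_Ioc_lt_top.ne)
    · exact (integrable_indicator_iff measurableSet_Ioc).2
        (hsq.mono_set Set.Ioc_subset_Icc_self)
    · exact (integrable_indicator_iff measurableSet_Ioc).2
        (integrableOn_const measure_Ioc_lt_top.ne)
  -- memA
  have hmemA : memA am ap u := by
    constructor
    · have hc : Tendsto (fun _ : ℝ => am) atBot (nhds am) := tendsto_const_nhds
      refine Tendsto.congr' ?_ hc
      filter_upwards [eventually_le_atBot (s-1)] with x hx
      simp [hudef, gl, hx, lt_of_le_of_lt hx hs1]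
    · have hc : Tendsto (fun _ : ℝ => ap) atTop (nhds ap) := tendsto_const_nhds
      refine Tendsto.congr' ?_ hc
      filter_upwards [eventually_gt_atTop (t+1)] with x hx
      have hns : ¬ x < s := by push_neg; linarith
      have hnt : ¬ x ≤ t := by push_neg; linarith
      have hnt1 : ¬ x ≤ t + 1 := by push_neg; linarith
      simp [hudef, gl, hns, hnt, hnt1]
  -- minimality applied to u
  have hJu := hJ u u' ⟨hFTC, hloc⟩ hmemA
  refine hJu.trans ?_
  -- the integrand vanishes outside Ioc (s-1) (t+1)
  have hind : (fun x => ENNReal.ofReal (‖u' x‖ ^ 2 / 2 + W (u x)))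
      = (Set.Ioc (s-1) (t+1)).indicator (fun x => ENNReal.ofReal (‖u' x‖ ^ 2 / 2 + W (u x))) := by
    funext x
    by_cases hx : x ∈ Set.Ioc (s-1) (t+1)
    · rw [Set.indicator_of_mem hx]
    · rw [Set.indicator_of_notMem hx]
      rw [Set.mem_Ioc, not_and_or] at hx
      rcases hx with hx | hx
      · push_neg at hx
        have hu0 : u x = am := by simp [hudef, gl, hx, lt_of_le_of_lt hx hs1]
        have hu'0 : u' x = 0 := by simp [hu'def, gl', hx]
        simp [hu0, hu'0, hWam]
      · push_neg at hx
        have hns : ¬ x < s := by push_neg; linarith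
        have hnt : ¬ x ≤ t := by push_neg; linarith
        have hnt1 : ¬ x ≤ t + 1 := by push_neg; linarith
        have hx1 : ¬ x ≤ s - 1 := by push_neg; linarith
        have hx2 : ¬ x ≤ s := by push_neg; linarith
        have hu0 : u x = ap := by simp [hudef, gl, hns, hnt, hnt1]
        have hu'0 : u' x = 0 := by simp [hu'def, gl', hx1, hx2, hnt, hnt1]
        simp [hu0, hu'0, hWap]
  have hsplit : Set.Ioc (s-1) (t+1) = (Set.Ioc (s-1) s ∪ Set.Ioc s t) ∪ Set.Ioc t (t+1) := by
    rw [Set.Ioc_union_Ioc_eq_Ioc (by linarith) hst.le,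
      Set.Ioc_union_Ioc_eq_Ioc (by linarith) (by linarith)]
  -- piece bounds
  have P1 : (∫⁻ x in Set.Ioc (s-1) s, ENNReal.ofReal (‖u' x‖ ^ 2 / 2 + W (u x)))
      ≤ ENNReal.ofReal ((1 + μ) / 2 * ‖p - am‖ ^ 2) := by
    have hb : ∀ x ∈ Set.Ioc (s-1) s, ENNReal.ofReal (‖u' x‖ ^ 2 / 2 + W (u x))
        ≤ ENNReal.ofReal ((1 + μ) / 2 * ‖p - am‖ ^ 2) := by
      intro x hx
      obtain ⟨hx1, hx2⟩ := hx
      have hu' : u' x = p - am := by simp [hu'def, gl', not_le.2 hx1, hx2]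
      have hux : ‖u x - am‖ ≤ ‖p - am‖ := by
        rcases lt_or_eq_of_le hx2 with h | h
        · have hu0 : u x = am + (x - (s-1)) • (p - am) := by
            simp [hudef, gl, h, not_le.2 hx1]
          rw [hu0]
          have : am + (x - (s-1)) • (p - am) - am = (x - (s-1)) • (p - am) := by abel
          rw [this, norm_smul, Real.norm_eq_abs]
          have h1 : |x - (s-1)| ≤ 1 := by rw [abs_le]; constructor <;> linarith
          have h2 := mul_le_mul_of_nonneg_right h1 (norm_nonneg (p - am))
          linarith [h2]
        · subst h
          have hu0 : u x = p := by simp [hudef, gl, hp, hst.le]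
          rw [hu0]
      have hWb : W (u x) ≤ μ / 2 * ‖p - am‖ ^ 2 := by
        have h1 := (hquad (u x)).1 (hux.trans hδ1)
        have h2 : ‖u x - am‖ ^ 2 ≤ ‖p - am‖ ^ 2 :=
          pow_le_pow_left₀ (norm_nonneg _) hux 2
        exact h1.trans (mul_le_mul_of_nonneg_left h2 (by linarith))
      refine ENNReal.ofReal_le_ofReal ?_
      rw [hu']
      linarith [hWb]
    calc (∫⁻ x in Set.Ioc (s-1) s, ENNReal.ofReal (‖u' x‖ ^ 2 / 2 + W (u x)))
        ≤ ∫⁻ _ in Set.Ioc (s-1) s, ENNReal.ofReal ((1 + μ) / 2 * ‖p - am‖ ^ 2) :=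
          setLIntegral_mono' measurableSet_Ioc hb
      _ = ENNReal.ofReal ((1 + μ) / 2 * ‖p - am‖ ^ 2) * volume (Set.Ioc (s-1) s) :=
          setLIntegral_const _ _
      _ = ENNReal.ofReal ((1 + μ) / 2 * ‖p - am‖ ^ 2) := by
          rw [Real.volume_Ioc]
          norm_num
  have P3 : (∫⁻ x in Set.Ioc t (t+1), ENNReal.ofReal (‖u' x‖ ^ 2 / 2 + W (u x)))
      ≤ ENNReal.ofReal ((1 + μ) / 2 * ‖q - ap‖ ^ 2) := by
    have hb : ∀ x ∈ Set.Ioc t (t+1), ENNReal.ofReal (‖u' x‖ ^ 2 / 2 + W (u x))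
        ≤ ENNReal.ofReal ((1 + μ) / 2 * ‖q - ap‖ ^ 2) := by
      intro x hx
      obtain ⟨hx1, hx2⟩ := hx
      have hh1 : ¬ x ≤ s - 1 := by push_neg; linarith
      have hh2 : ¬ x ≤ s := by push_neg; linarith
      have hh3 : ¬ x ≤ t := not_le.2 hx1
      have hu' : u' x = ap - q := by simp [hu'def, gl', hh1, hh2, hh3, hx2]
      have hns : ¬ x < s := by push_neg; linarith
      have hu0 : u x = q + (x - t) • (ap - q) := by simp [hudef, gl, hns, hh3, hx2]
      have hux : ‖u x - ap‖ ≤ ‖q - ap‖ := by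
        rw [hu0]
        have : q + (x - t) • (ap - q) - ap = (1 - (x - t)) • (q - ap) := by
          module
        rw [this, norm_smul, Real.norm_eq_abs]
        have h1 : |1 - (x - t)| ≤ 1 := by rw [abs_le]; constructor <;> linarith
        have h2 := mul_le_mul_of_nonneg_right h1 (norm_nonneg (q - ap))
        linarith [h2]
      have hWb : W (u x) ≤ μ / 2 * ‖q - ap‖ ^ 2 := by
        have h1 := (hquad (u x)).2 (hux.trans hδ2)
        have h2 : ‖u x - ap‖ ^ 2 ≤ ‖q - ap‖ ^ 2 :=
          pow_le_pow_left₀ (norm_nonneg _) hux 2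
        exact h1.trans (mul_le_mul_of_nonneg_left h2 (by linarith))
      refine ENNReal.ofReal_le_ofReal ?_
      rw [hu']
      have hrev : ‖ap - q‖ = ‖q - ap‖ := norm_sub_rev _ _
      rw [hrev]
      linarith [hWb]
    calc (∫⁻ x in Set.Ioc t (t+1), ENNReal.ofReal (‖u' x‖ ^ 2 / 2 + W (u x)))
        ≤ ∫⁻ _ in Set.Ioc t (t+1), ENNReal.ofReal ((1 + μ) / 2 * ‖q - ap‖ ^ 2) :=
          setLIntegral_mono' measurableSet_Ioc hb
      _ = ENNReal.ofReal ((1 + μ) / 2 * ‖q - ap‖ ^ 2) * volume (Set.Ioc t (t+1)) :=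
          setLIntegral_const _ _
      _ = ENNReal.ofReal ((1 + μ) / 2 * ‖q - ap‖ ^ 2) := by
          rw [Real.volume_Ioc]
          norm_num
  have P2 : (∫⁻ x in Set.Ioc s t, ENNReal.ofReal (‖u' x‖ ^ 2 / 2 + W (u x)))
      = ∫⁻ x in Set.Ioc s t, ENNReal.ofReal (‖mid' x‖ ^ 2 / 2 + W (mid x)) := by
    apply setLIntegral_congr_fun measurableSet_Ioc
    intro x hx
    simp only []
    obtain ⟨hx1, hx2⟩ := hx
    have hh1 : ¬ x ≤ s - 1 := by push_neg; linarith
    have hh2 : ¬ x ≤ s := not_le.2 hx1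
    have hns : ¬ x < s := by push_neg; linarith
    have hu' : u' x = mid' x := by simp [hu'def, gl', hh1, hh2, hx2]
    have hu0 : u x = mid x := by simp [hudef, gl, hns, hx2]
    rw [hu', hu0]
  -- assemble
  calc actJ W u u'
      = ∫⁻ x, (Set.Ioc (s-1) (t+1)).indicator
          (fun x => ENNReal.ofReal (‖u' x‖ ^ 2 / 2 + W (u x))) x := by
        rw [actJ]
        exact lintegral_congr fun x => congrFun hind x
    _ = ∫⁻ x in Set.Ioc (s-1) (t+1), ENNReal.ofReal (‖u' x‖ ^ 2 / 2 + W (u x)) :=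
        lintegral_indicator measurableSet_Ioc _
    _ ≤ (∫⁻ x in Set.Ioc (s-1) s, ENNReal.ofReal (‖u' x‖ ^ 2 / 2 + W (u x)))
          + (∫⁻ x in Set.Ioc s t, ENNReal.ofReal (‖u' x‖ ^ 2 / 2 + W (u x)))
          + (∫⁻ x in Set.Ioc t (t+1), ENNReal.ofReal (‖u' x‖ ^ 2 / 2 + W (u x))) := by
        rw [hsplit]
        refine (lintegral_union_le _ _ _).trans ?_
        exact add_le_add (lintegral_union_le _ _ _) le_rfl
    _ ≤ ENNReal.ofReal ((1 + μ) / 2 * ‖p - am‖ ^ 2)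
          + (∫⁻ x in Set.Ioc s t, ENNReal.ofReal (‖mid' x‖ ^ 2 / 2 + W (mid x)))
          + ENNReal.ofReal ((1 + μ) / 2 * ‖q - ap‖ ^ 2) := by
        rw [P2]
        exact add_le_add (add_le_add P1 le_rfl) P3
    _ = (∫⁻ x in Set.Ioc s t, ENNReal.ofReal (‖mid' x‖ ^ 2 / 2 + W (mid x)))
          + ENNReal.ofReal ((1 + μ) / 2 * (‖p - am‖ ^ 2 + ‖q - ap‖ ^ 2)) := by
        have hnn : (0:ℝ) ≤ (1 + μ) / 2 := by linarith
        rw [mul_add, ENNReal.ofReal_add (mul_nonneg hnn (sq_nonneg _)) (mul_nonneg hnn (sq_nonneg _))]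
        ring


/-- Lower bound for the action of paths connecting the `ε`-spheres around `a⁻` and `a⁺`:
`J_{[α,β]}(v) ≥ J_min − (μ+1)ε²`. -/
theorem stmt_17 {m : ℕ} (W : EuclideanSpace ℝ (Fin m) → ℝ)
    (am ap : EuclideanSpace ℝ (Fin m)) (r c : ℝ) (hW : HypH m W am ap r c)
    (Jmin : ℝ) (hJmin : IsMinAction W am ap Jmin)
    (μ : ℝ) (hμ : 0 < μ)
    (hquad : ∀ u : EuclideanSpace ℝ (Fin m),
      (‖u - am‖ ≤ r → W u ≤ μ / 2 * ‖u - am‖ ^ 2) ∧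
      (‖u - ap‖ ≤ r → W u ≤ μ / 2 * ‖u - ap‖ ^ 2))
    (ε : ℝ) (hε0 : 0 < ε) (hεr : ε < r)
    (α β : ℝ) (hαβ : α < β)
    (v v' : ℝ → EuclideanSpace ℝ (Fin m))
    -- `v ∈ H¹([α,β];ℝ^m)` with derivative `v'`
    (hv : ∀ a ∈ Set.Icc α β, ∀ b ∈ Set.Icc α β, v b - v a = ∫ x in a..b, v' x)
    (hv' : (∫⁻ x in Set.Icc α β, ENNReal.ofReal (‖v' x‖ ^ 2)) < ⊤)
    (hva : ‖v α - am‖ = ε) (hvb : ‖v β - ap‖ = ε) :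
    ENNReal.ofReal (Jmin - (μ + 1) * ε ^ 2) ≤ actJI W v v' (Set.Icc α β) := by
  by_cases hii : IntervalIntegrable v' volume α β
  · -- good case: glue v itself
    have hIoc : IntegrableOn v' (Set.Ioc α β) volume :=
      (intervalIntegrable_iff_integrableOn_Ioc_of_le hαβ.le).1 hii
    have hIcc : IntegrableOn v' (Set.Icc α β) volume :=
      (integrableOn_Icc_iff_integrableOn_Ioc enorm_ne_top).2 hIoc
    have hsq : IntegrableOn (fun x => ‖v' x‖ ^ 2) (Set.Icc α β) volume := by
      constructor
      · exact (hIcc.aestronglyMeasurable.norm.aemeasurable.pow_const 2).aestronglyMeasurable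
      · rw [HasFiniteIntegral]
        calc (∫⁻ x in Set.Icc α β, ‖‖v' x‖ ^ 2‖₊ ∂volume)
            = ∫⁻ x in Set.Icc α β, ENNReal.ofReal (‖v' x‖ ^ 2) := by
              apply lintegral_congr
              intro x
              exact Real.enorm_eq_ofReal (sq_nonneg _)
          _ < ⊤ := hv'
    have key := glue_bound W am ap r hW.zero_am hW.zero_ap μ hμ.le hquad Jmin hJmin.2.2 α β hαβ v v' hv hii hsq
      (by rw [hva]; exact hεr.le) (by rw [hvb]; exact hεr.le)
    rw [hva, hvb] at key
    have h2 : (1 + μ) / 2 * (ε ^ 2 + ε ^ 2) = (μ + 1) * ε ^ 2 := by ring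
    rw [h2] at key
    have h3 : (∫⁻ x in Set.Ioc α β, ENNReal.ofReal (‖v' x‖ ^ 2 / 2 + W (v x)))
        ≤ actJI W v v' (Set.Icc α β) := lintegral_mono_set Set.Ioc_subset_Icc_self
    rw [ENNReal.ofReal_sub _ (by positivity)]
    exact tsub_le_iff_right.2 (key.trans (add_le_add h3 le_rfl))
  · -- bad case: v β = v α, direct competitor shows Jmin small
    have hvv : v β = v α := by
      have h := hv α ⟨le_rfl, hαβ.le⟩ β ⟨hαβ.le, le_rfl⟩
      rw [intervalIntegral.integral_undef hii] at h
      exact sub_eq_zero.1 h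
    set d := ap - v α with hd
    have hdn : ‖d‖ = ε := by
      rw [hd, norm_sub_rev, ← hvv, hvb]
    set md := fun x : ℝ => v α + x • d with hmd
    have hmid : ∀ a ∈ Set.Icc (0:ℝ) 1, ∀ b ∈ Set.Icc (0:ℝ) 1,
        md b - md a = ∫ x in a..b, d := by
      intro a _ b _
      rw [intervalIntegral.integral_const, hmd]
      simp only
      module
    have key := glue_bound W am ap r hW.zero_am hW.zero_ap μ hμ.le hquad Jmin hJmin.2.2 0 1 one_pos md (fun _ => d)
      hmid intervalIntegrable_const
      (integrableOn_const measure_Icc_lt_top.ne)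
      (by simp [hmd, hva]; linarith [hεr]) (by simp [hmd]; rw [show v α + d - ap = 0 by rw [hd]; abel]; simp [hW.r_pos.le])
    have hmd0 : md 0 = v α := by simp [hmd]
    have hmd1 : md 1 = ap := by rw [hmd]; simp [hd]
    rw [hmd0, hmd1, hva] at key
    have hz : ‖ap - ap‖ = 0 := by simp
    rw [hz] at key
    -- bound middle integral
    have hM : (∫⁻ x in Set.Ioc (0:ℝ) 1, ENNReal.ofReal (‖(fun _ : ℝ => d) x‖ ^ 2 / 2 + W (md x)))
        ≤ ENNReal.ofReal ((1 + μ) / 2 * ε ^ 2) := by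
      have hb : ∀ x ∈ Set.Ioc (0:ℝ) 1, ENNReal.ofReal (‖(fun _ : ℝ => d) x‖ ^ 2 / 2 + W (md x))
          ≤ ENNReal.ofReal ((1 + μ) / 2 * ε ^ 2) := by
        intro x hx
        obtain ⟨hx1, hx2⟩ := hx
        have hmdx : ‖md x - ap‖ ≤ ε := by
          have : md x - ap = (x - 1) • d := by rw [hmd, hd]; simp only; module
          rw [this, norm_smul, Real.norm_eq_abs, hdn]
          have h1 : |x - 1| ≤ 1 := by rw [abs_le]; constructor <;> linarith
          nlinarith [hε0.le]
        have hWb : W (md x) ≤ μ / 2 * ε ^ 2 := by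
          have h1 := (hquad (md x)).2 (hmdx.trans hεr.le)
          have h2 : ‖md x - ap‖ ^ 2 ≤ ε ^ 2 := pow_le_pow_left₀ (norm_nonneg _) hmdx 2
          exact h1.trans (mul_le_mul_of_nonneg_left h2 (by linarith))
        refine ENNReal.ofReal_le_ofReal ?_
        simp only [hdn]
        linarith [hWb]
      calc (∫⁻ x in Set.Ioc (0:ℝ) 1, ENNReal.ofReal (‖(fun _ : ℝ => d) x‖ ^ 2 / 2 + W (md x)))
          ≤ ∫⁻ _ in Set.Ioc (0:ℝ) 1, ENNReal.ofReal ((1 + μ) / 2 * ε ^ 2) :=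
            setLIntegral_mono' measurableSet_Ioc hb
        _ = ENNReal.ofReal ((1 + μ) / 2 * ε ^ 2) * volume (Set.Ioc (0:ℝ) 1) :=
            setLIntegral_const _ _
        _ = ENNReal.ofReal ((1 + μ) / 2 * ε ^ 2) := by
            rw [Real.volume_Ioc]
            norm_num
    have hnn : (0:ℝ) ≤ (1 + μ) / 2 := by linarith
    have key2 : ENNReal.ofReal Jmin ≤ ENNReal.ofReal ((1 + μ) * ε ^ 2) := by
      refine key.trans ?_
      refine (add_le_add hM le_rfl).trans ?_
      rw [← ENNReal.ofReal_add (mul_nonneg hnn (sq_nonneg _)) (by positivity)]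
      apply ENNReal.ofReal_le_ofReal
      nlinarith [sq_nonneg ε]
    have hJle : Jmin ≤ (1 + μ) * ε ^ 2 :=
      (ENNReal.ofReal_le_ofReal_iff (by positivity)).1 key2
    have h0 : Jmin - (μ + 1) * ε ^ 2 ≤ 0 := by nlinarith
    rw [ENNReal.ofReal_eq_zero.2 h0]
    exact bot_le



end
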